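/- Let V be an isometry on a Hilbert space H and let A be a bounded operator on H commuting with V. Then there exist a Hilbert space K, an isometric embedding J : H → K, a unitary U on K extending V (U J = J V), and a bounded operator B on K with ‖B‖ = ‖A‖, B J = J A, and B U = U B. -/

import Mathlib

open ContinuousLinearMap

universe u

noncomputable section DL14sec

namespace DL14

local notation "⟪" x ", " y "⟫" => @inner ℂ _ _ x y

variable {H : Type u} [NormedAddCommGroup H] [InnerProductSpace ℂ H]
variable (V : H →L[ℂ] H) (hV : ∀ x : H, ‖V x‖ = ‖x‖)
include hV

omit hV in
lemma appV (a b : ℕ) (x : H) : (V ^ a) ((V ^ b) x) = (V ^ (a + b)) x := by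
  rw [pow_add]; rfl

omit hV in
lemma Veq {a b : ℕ} (h : a = b) (x : H) : (V ^ a) x = (V ^ b) x := by rw [h]

lemma norm_powV (n : ℕ) (x : H) : ‖(V ^ n) x‖ = ‖x‖ := by
  induction n with
  | zero => simp
  | succ k ih =>
    rw [pow_succ', ContinuousLinearMap.mul_apply, hV, ih]

lemma powV_inj (n : ℕ) : Function.Injective (V ^ n : H →L[ℂ] H) := by
  intro a b h
  have : ‖(V ^ n) (a - b)‖ = ‖a - b‖ := norm_powV V hV n _
  rw [map_sub, h, sub_self] at this
  simpa [sub_eq_zero] using this.symm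

lemma inner_powV (n : ℕ) (x y : H) : ⟪(V ^ n) x, (V ^ n) y⟫ = ⟪x, y⟫ := by
  have : (H →ₗᵢ[ℂ] H) := ⟨(V ^ n : H →L[ℂ] H), norm_powV V hV n⟩
  exact LinearIsometry.inner_map_map (⟨((V ^ n : H →L[ℂ] H) : H →ₗ[ℂ] H), norm_powV V hV n⟩ : H →ₗᵢ[ℂ] H) x y

lemma shiftEq {a b : ℕ} {x y : H} (h : (V ^ a) x = (V ^ b) y) (k : ℕ) :
    (V ^ (k + a)) x = (V ^ (k + b)) y := by
  rw [← appV, h, appV]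

/-- The setoid on `ℕ × H` defining the direct limit along `V`. -/
def sett : Setoid (ℕ × H) where
  r p q := (V ^ q.1) p.2 = (V ^ p.1) q.2
  iseqv := by
    constructor
    · intro p; rfl
    · intro p q h; exact h.symm
    · rintro ⟨n, x⟩ ⟨m, y⟩ ⟨k, z⟩ h1 h2
      apply powV_inj V hV m
      calc (V ^ m) ((V ^ k) x) = (V ^ k) ((V ^ m) x) := by rw [appV, appV, Veq V (Nat.add_comm m k)]
        _ = (V ^ k) ((V ^ n) y) := by rw [h1]
        _ = (V ^ n) ((V ^ k) y) := by rw [appV, appV, Veq V (Nat.add_comm k n)]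
        _ = (V ^ n) ((V ^ m) z) := by rw [h2]
        _ = (V ^ m) ((V ^ n) z) := by rw [appV, appV, Veq V (Nat.add_comm n m)]

/-- The pre-Hilbert direct limit. -/
def K0 : Type u := Quotient (sett V hV)

def mk (p : ℕ × H) : K0 V hV := Quotient.mk (sett V hV) p

lemma mk_eq_iff {p q : ℕ × H} : mk V hV p = mk V hV q ↔ (V ^ q.1) p.2 = (V ^ p.1) q.2 :=
  ⟨fun h => Quotient.exact h, fun h => Quotient.sound h⟩

lemma mk_shift (n m : ℕ) (a : H) : mk V hV (n, a) = mk V hV (n + m, (V ^ m) a) := by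
  rw [mk_eq_iff]; exact (appV V n m a).symm

lemma mk_shift' (n m : ℕ) (a : H) : mk V hV (m, a) = mk V hV (n + m, (V ^ n) a) := by
  rw [mk_eq_iff, appV]; exact Veq V (Nat.add_comm n m) a

lemma exists_rep (z : K0 V hV) : ∃ n a, z = mk V hV (n, a) := by
  induction z using Quotient.ind with
  | _ p => exact ⟨p.1, p.2, rfl⟩

lemma exists_rep₂ (z w : K0 V hV) : ∃ n a b, z = mk V hV (n, a) ∧ w = mk V hV (n, b) := by
  obtain ⟨n, a, rfl⟩ := exists_rep V hV z
  obtain ⟨m, b, rfl⟩ := exists_rep V hV w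
  exact ⟨n + m, (V ^ m) a, (V ^ n) b, mk_shift V hV n m a, mk_shift' V hV n m b⟩

lemma exists_rep₃ (z w u : K0 V hV) :
    ∃ n a b c, z = mk V hV (n, a) ∧ w = mk V hV (n, b) ∧ u = mk V hV (n, c) := by
  obtain ⟨n, a, b, rfl, rfl⟩ := exists_rep₂ V hV z w
  obtain ⟨m, c, rfl⟩ := exists_rep V hV u
  exact ⟨n + m, (V ^ m) a, (V ^ m) b, (V ^ n) c,
    mk_shift V hV n m a, mk_shift V hV n m b, mk_shift' V hV n m c⟩


/-! ### Algebraic operations on `K0` -/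

def addQ : K0 V hV → K0 V hV → K0 V hV :=
  Quotient.lift₂ (fun p q => mk V hV (p.1 + q.1, (V ^ q.1) p.2 + (V ^ p.1) q.2))
    (by
      rintro ⟨n, x⟩ ⟨m, y⟩ ⟨n', x'⟩ ⟨m', y'⟩ h1 h2
      change (V ^ n') x = (V ^ n) x' at h1
      change (V ^ m') y = (V ^ m) y' at h2
      rw [mk_eq_iff]
      show (V ^ (n' + m')) ((V ^ m) x + (V ^ n) y) = (V ^ (n + m)) ((V ^ m') x' + (V ^ n') y')
      rw [map_add, map_add, appV, appV, appV, appV]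
      have A1 : (V ^ (m + m' + n')) x = (V ^ (m + m' + n)) x' := shiftEq V hV h1 (m + m')
      have A2 : (V ^ (n + n' + m')) y = (V ^ (n + n' + m)) y' := shiftEq V hV h2 (n + n')
      rw [Veq V (show n' + m' + m = m + m' + n' by omega) x,
        Veq V (show n' + m' + n = n + n' + m' by omega) y, A1, A2,
        Veq V (show m + m' + n = n + m + m' by omega) x',
        Veq V (show n + n' + m = n + m + n' by omega) y'])

def negQ : K0 V hV → K0 V hV :=
  Quotient.lift (fun p => mk V hV (p.1, -p.2))
    (by
      rintro ⟨n, x⟩ ⟨m, y⟩ h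
      change (V ^ m) x = (V ^ n) y at h
      rw [mk_eq_iff]
      show (V ^ m) (-x) = (V ^ n) (-y)
      rw [map_neg, map_neg, h])

def smulQ (c : ℂ) : K0 V hV → K0 V hV :=
  Quotient.lift (fun p => mk V hV (p.1, c • p.2))
    (by
      rintro ⟨n, x⟩ ⟨m, y⟩ h
      change (V ^ m) x = (V ^ n) y at h
      rw [mk_eq_iff]
      show (V ^ m) (c • x) = (V ^ n) (c • y)
      rw [map_smul, map_smul, h])

lemma addQ_mk (n : ℕ) (a b : H) :
    addQ V hV (mk V hV (n, a)) (mk V hV (n, b)) = mk V hV (n, a + b) := by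
  show mk V hV (n + n, (V ^ n) a + (V ^ n) b) = mk V hV (n, a + b)
  rw [← map_add, ← mk_shift']

instance : Zero (K0 V hV) := ⟨mk V hV (0, 0)⟩
instance : Add (K0 V hV) := ⟨addQ V hV⟩
instance : Neg (K0 V hV) := ⟨negQ V hV⟩

instance : AddCommGroup (K0 V hV) where
  add := (· + ·)
  zero := 0
  neg := (- ·)
  add_assoc x y z := by
    obtain ⟨n, a, b, c, rfl, rfl, rfl⟩ := exists_rep₃ V hV x y z
    show addQ V hV (addQ V hV _ _) _ = addQ V hV _ (addQ V hV _ _)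
    rw [addQ_mk, addQ_mk, addQ_mk, addQ_mk, add_assoc]
  zero_add x := by
    obtain ⟨n, a, rfl⟩ := exists_rep V hV x
    show addQ V hV (mk V hV (0, 0)) _ = _
    rw [show mk V hV ((0 : ℕ), (0 : H)) = mk V hV (n, 0) by
      rw [mk_eq_iff]; simp, addQ_mk, zero_add]
  add_zero x := by
    obtain ⟨n, a, rfl⟩ := exists_rep V hV x
    show addQ V hV _ (mk V hV (0, 0)) = _
    rw [show mk V hV ((0 : ℕ), (0 : H)) = mk V hV (n, 0) by
      rw [mk_eq_iff]; simp, addQ_mk, add_zero]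
  add_comm x y := by
    obtain ⟨n, a, b, rfl, rfl⟩ := exists_rep₂ V hV x y
    show addQ V hV _ _ = addQ V hV _ _
    rw [addQ_mk, addQ_mk, add_comm]
  neg_add_cancel x := by
    obtain ⟨n, a, rfl⟩ := exists_rep V hV x
    show addQ V hV (negQ V hV _) _ = mk V hV (0, 0)
    show addQ V hV (mk V hV (n, -a)) _ = mk V hV (0, 0)
    rw [addQ_mk, neg_add_cancel, mk_eq_iff]; simp
  nsmul := nsmulRec
  zsmul := zsmulRec

lemma mk_add (n : ℕ) (a b : H) :
    mk V hV (n, a) + mk V hV (n, b) = mk V hV (n, a + b) := addQ_mk V hV n a b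

lemma mk_zero : (0 : K0 V hV) = mk V hV (0, 0) := rfl

lemma mk_zero' (n : ℕ) : (0 : K0 V hV) = mk V hV (n, 0) := by
  rw [mk_zero, mk_eq_iff]; simp

instance : Module ℂ (K0 V hV) where
  smul := smulQ V hV
  one_smul x := by
    obtain ⟨n, a, rfl⟩ := exists_rep V hV x
    show smulQ V hV 1 _ = _
    show mk V hV (n, (1 : ℂ) • a) = _
    rw [one_smul]
  mul_smul c d x := by
    obtain ⟨n, a, rfl⟩ := exists_rep V hV x
    show mk V hV (n, (c * d) • a) = smulQ V hV c (mk V hV (n, d • a))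
    show _ = mk V hV (n, c • d • a)
    rw [mul_smul]
  smul_zero c := by
    show smulQ V hV c (mk V hV (0, 0)) = mk V hV (0, 0)
    show mk V hV (0, c • (0 : H)) = _
    rw [smul_zero]
  smul_add c x y := by
    obtain ⟨n, a, b, rfl, rfl⟩ := exists_rep₂ V hV x y
    show smulQ V hV c (addQ V hV _ _) = addQ V hV (smulQ V hV c _) (smulQ V hV c _)
    rw [addQ_mk]
    show mk V hV (n, c • (a + b)) = addQ V hV (mk V hV (n, c • a)) (mk V hV (n, c • b))
    rw [addQ_mk, smul_add]
  add_smul c d x := by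
    obtain ⟨n, a, rfl⟩ := exists_rep V hV x
    show mk V hV (n, (c + d) • a) = addQ V hV (mk V hV (n, c • a)) (mk V hV (n, d • a))
    rw [addQ_mk, add_smul]
  zero_smul x := by
    obtain ⟨n, a, rfl⟩ := exists_rep V hV x
    show mk V hV (n, (0 : ℂ) • a) = (0 : K0 V hV)
    rw [zero_smul, ← mk_zero']

lemma mk_smul (c : ℂ) (n : ℕ) (a : H) :
    c • mk V hV (n, a) = mk V hV (n, c • a) := rfl



/-! ### Inner product on `K0` -/

def innerQ : K0 V hV → K0 V hV → ℂ :=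
  Quotient.lift₂ (fun p q => (⟪(V ^ q.1) p.2, (V ^ p.1) q.2⟫ : ℂ))
    (by
      rintro ⟨n, x⟩ ⟨m, y⟩ ⟨n', x'⟩ ⟨m', y'⟩ h1 h2
      change (V ^ n') x = (V ^ n) x' at h1
      change (V ^ m') y = (V ^ m) y' at h2
      show (⟪(V ^ m) x, (V ^ n) y⟫ : ℂ) = ⟪(V ^ m') x', (V ^ n') y'⟫
      have A1 : (V ^ (m + m' + n')) x = (V ^ (m + m' + n)) x' := shiftEq V hV h1 (m + m')
      have A2 : (V ^ (n + n' + m')) y = (V ^ (n + n' + m)) y' := shiftEq V hV h2 (n + n')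
      calc (⟪(V ^ m) x, (V ^ n) y⟫ : ℂ)
          = ⟪(V ^ (n' + m')) ((V ^ m) x), (V ^ (n' + m')) ((V ^ n) y)⟫ :=
            (inner_powV V hV (n' + m') _ _).symm
        _ = ⟪(V ^ (m + m' + n')) x, (V ^ (n + n' + m')) y⟫ := by
            rw [appV, appV, Veq V (show n' + m' + m = m + m' + n' by omega) x,
              Veq V (show n' + m' + n = n + n' + m' by omega) y]
        _ = ⟪(V ^ (n + m)) ((V ^ m') x'), (V ^ (n + m)) ((V ^ n') y')⟫ := by
            rw [A1, A2, appV, appV, Veq V (show m + m' + n = n + m + m' by omega) x',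
              Veq V (show n + n' + m = n + m + n' by omega) y']
        _ = ⟪(V ^ m') x', (V ^ n') y'⟫ := inner_powV V hV (n + m) _ _)

lemma innerQ_mk (n : ℕ) (a b : H) :
    innerQ V hV (mk V hV (n, a)) (mk V hV (n, b)) = ⟪a, b⟫ := by
  show (⟪(V ^ n) a, (V ^ n) b⟫ : ℂ) = ⟪a, b⟫
  exact inner_powV V hV n a b

def core : InnerProductSpace.Core ℂ (K0 V hV) where
  inner := innerQ V hV
  conj_inner_symm x y := by
    obtain ⟨n, a, b, rfl, rfl⟩ := exists_rep₂ V hV x y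
    show (starRingEnd ℂ) (innerQ V hV _ _) = innerQ V hV _ _
    rw [innerQ_mk, innerQ_mk, inner_conj_symm]
  re_inner_nonneg x := by
    obtain ⟨n, a, rfl⟩ := exists_rep V hV x
    show 0 ≤ RCLike.re (innerQ V hV _ _)
    rw [innerQ_mk]
    exact inner_self_nonneg
  definite x hx := by
    obtain ⟨n, a, rfl⟩ := exists_rep V hV x
    change innerQ V hV _ _ = 0 at hx
    rw [innerQ_mk, inner_self_eq_zero] at hx
    rw [hx, ← mk_zero']
  add_left x y z := by
    obtain ⟨n, a, b, c, rfl, rfl, rfl⟩ := exists_rep₃ V hV x y z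
    show innerQ V hV (mk V hV (n, a) + mk V hV (n, b)) _ = innerQ V hV _ _ + innerQ V hV _ _
    rw [mk_add, innerQ_mk, innerQ_mk, innerQ_mk, inner_add_left]
  smul_left x y r := by
    obtain ⟨n, a, b, rfl, rfl⟩ := exists_rep₂ V hV x y
    show innerQ V hV (r • mk V hV (n, a)) _ = _ * innerQ V hV _ _
    rw [mk_smul, innerQ_mk, innerQ_mk, inner_smul_left]

instance : NormedAddCommGroup (K0 V hV) := (core V hV).toNormedAddCommGroup

instance : InnerProductSpace ℂ (K0 V hV) := InnerProductSpace.ofCore (core V hV).toCore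

lemma norm_mk (n : ℕ) (a : H) : ‖mk V hV (n, a)‖ = ‖a‖ := by
  have h : (‖mk V hV (n, a)‖ : ℝ) = Real.sqrt (RCLike.re (innerQ V hV (mk V hV (n, a)) (mk V hV (n, a)))) := rfl
  rw [h, innerQ_mk, inner_self_eq_norm_sq (𝕜 := ℂ) a, Real.sqrt_sq (norm_nonneg a)]



/-! ### The basic maps on `K0` -/

omit hV in
lemma powV_comm_V (k : ℕ) (x : H) : (V ^ k) (V x) = V ((V ^ k) x) := by
  have h1 : (V ^ k) (V x) = (V ^ (k + 1)) x := by
    rw [pow_succ, ContinuousLinearMap.mul_apply]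
  have h2 : V ((V ^ k) x) = (V ^ (k + 1)) x := by
    rw [pow_succ', ContinuousLinearMap.mul_apply]
  rw [h1, h2]

/-- The embedding `H → K0`. -/
def J0 : H →ₗ[ℂ] K0 V hV where
  toFun x := mk V hV (0, x)
  map_add' x y := (mk_add V hV 0 x y).symm
  map_smul' c x := (mk_smul V hV c 0 x).symm

/-- The extension of `V` to `K0`. -/
def U0 : K0 V hV →ₗ[ℂ] K0 V hV where
  toFun := Quotient.lift (fun p => mk V hV (p.1, V p.2))
    (by
      rintro ⟨n, x⟩ ⟨m, y⟩ h
      change (V ^ m) x = (V ^ n) y at h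
      rw [mk_eq_iff]
      show (V ^ m) (V x) = (V ^ n) (V y)
      rw [powV_comm_V, powV_comm_V, h])
  map_add' x y := by
    obtain ⟨n, a, b, rfl, rfl⟩ := exists_rep₂ V hV x y
    show Quotient.lift _ _ (mk V hV (n, a) + mk V hV (n, b)) = _
    rw [mk_add]
    show mk V hV (n, V (a + b)) = mk V hV (n, V a) + mk V hV (n, V b)
    rw [mk_add, map_add]
  map_smul' c x := by
    obtain ⟨n, a, rfl⟩ := exists_rep V hV x
    simp only [RingHom.id_apply]
    rw [mk_smul]
    show mk V hV (n, V (c • a)) = c • mk V hV (n, V a)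
    rw [mk_smul, map_smul]

/-- The inverse of `U0`. -/
def W0 : K0 V hV →ₗ[ℂ] K0 V hV where
  toFun := Quotient.lift (fun p => mk V hV (p.1 + 1, p.2))
    (by
      rintro ⟨n, x⟩ ⟨m, y⟩ h
      change (V ^ m) x = (V ^ n) y at h
      rw [mk_eq_iff]
      show (V ^ (m + 1)) x = (V ^ (n + 1)) y
      rw [Veq V (Nat.add_comm m 1) x, Veq V (Nat.add_comm n 1) y]
      exact shiftEq V hV h 1)
  map_add' x y := by
    obtain ⟨n, a, b, rfl, rfl⟩ := exists_rep₂ V hV x y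
    show Quotient.lift _ _ (mk V hV (n, a) + mk V hV (n, b)) = _
    rw [mk_add]
    show mk V hV (n + 1, a + b) = mk V hV (n + 1, a) + mk V hV (n + 1, b)
    rw [mk_add]
  map_smul' c x := by
    obtain ⟨n, a, rfl⟩ := exists_rep V hV x
    simp only [RingHom.id_apply]
    rw [mk_smul]
    show mk V hV (n + 1, c • a) = c • mk V hV (n + 1, a)
    rw [mk_smul]

lemma J0_apply (x : H) : J0 V hV x = mk V hV (0, x) := rfl
lemma U0_apply (n : ℕ) (a : H) : U0 V hV (mk V hV (n, a)) = mk V hV (n, V a) := rfl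
lemma W0_apply (n : ℕ) (a : H) : W0 V hV (mk V hV (n, a)) = mk V hV (n + 1, a) := rfl

lemma norm_J0 (x : H) : ‖J0 V hV x‖ = ‖x‖ := norm_mk V hV 0 x

lemma norm_U0 (z : K0 V hV) : ‖U0 V hV z‖ = ‖z‖ := by
  obtain ⟨n, a, rfl⟩ := exists_rep V hV z
  rw [U0_apply, norm_mk, norm_mk, hV]

lemma norm_W0 (z : K0 V hV) : ‖W0 V hV z‖ = ‖z‖ := by
  obtain ⟨n, a, rfl⟩ := exists_rep V hV z
  rw [W0_apply, norm_mk, norm_mk]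

lemma U0_W0 (z : K0 V hV) : U0 V hV (W0 V hV z) = z := by
  obtain ⟨n, a, rfl⟩ := exists_rep V hV z
  rw [W0_apply, U0_apply, mk_eq_iff]
  show (V ^ n) (V a) = (V ^ (n + 1)) a
  rw [pow_succ, ContinuousLinearMap.mul_apply]

variable (A : H →L[ℂ] H) (hAV : A ∘L V = V ∘L A)

omit hV in
lemma A_powV (hAV : A ∘L V = V ∘L A) (k : ℕ) (x : H) : A ((V ^ k) x) = (V ^ k) (A x) := by
  induction k with
  | zero => simp
  | succ m ih =>
    have hAVx : ∀ y : H, A (V y) = V (A y) := fun y => by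
      have := ContinuousLinearMap.ext_iff.mp hAV y
      simpa using this
    rw [pow_succ', ContinuousLinearMap.mul_apply, ContinuousLinearMap.mul_apply, hAVx, ih]

/-- The extension of `A` to `K0`. -/
def B0 (hAV : A ∘L V = V ∘L A) : K0 V hV →ₗ[ℂ] K0 V hV where
  toFun := Quotient.lift (fun p => mk V hV (p.1, A p.2))
    (by
      rintro ⟨n, x⟩ ⟨m, y⟩ h
      change (V ^ m) x = (V ^ n) y at h
      rw [mk_eq_iff]
      show (V ^ m) (A x) = (V ^ n) (A y)
      rw [← A_powV V A hAV, ← A_powV V A hAV, h])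
  map_add' x y := by
    obtain ⟨n, a, b, rfl, rfl⟩ := exists_rep₂ V hV x y
    show Quotient.lift _ _ (mk V hV (n, a) + mk V hV (n, b)) = _
    rw [mk_add]
    show mk V hV (n, A (a + b)) = mk V hV (n, A a) + mk V hV (n, A b)
    rw [mk_add, map_add]
  map_smul' c x := by
    obtain ⟨n, a, rfl⟩ := exists_rep V hV x
    simp only [RingHom.id_apply]
    rw [mk_smul]
    show mk V hV (n, A (c • a)) = c • mk V hV (n, A a)
    rw [mk_smul, map_smul]

lemma B0_apply (n : ℕ) (a : H) : B0 V hV A hAV (mk V hV (n, a)) = mk V hV (n, A a) := rfl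

lemma norm_B0 (z : K0 V hV) : ‖B0 V hV A hAV z‖ ≤ ‖A‖ * ‖z‖ := by
  obtain ⟨n, a, rfl⟩ := exists_rep V hV z
  rw [B0_apply, norm_mk, norm_mk]
  exact A.le_opNorm a

lemma B0_U0 (z : K0 V hV) : B0 V hV A hAV (U0 V hV z) = U0 V hV (B0 V hV A hAV z) := by
  obtain ⟨n, a, rfl⟩ := exists_rep V hV z
  rw [U0_apply, B0_apply, B0_apply, U0_apply]
  have h : A (V a) = V (A a) := by
    have := ContinuousLinearMap.ext_iff.mp hAV a
    simpa using this
  rw [h]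



/-! ### Bundled continuous linear maps -/

def Jc : H →L[ℂ] K0 V hV :=
  (⟨J0 V hV, norm_J0 V hV⟩ : H →ₗᵢ[ℂ] K0 V hV).toContinuousLinearMap

def U0c : K0 V hV →L[ℂ] K0 V hV :=
  (⟨U0 V hV, norm_U0 V hV⟩ : K0 V hV →ₗᵢ[ℂ] K0 V hV).toContinuousLinearMap

def W0c : K0 V hV →L[ℂ] K0 V hV :=
  (⟨W0 V hV, norm_W0 V hV⟩ : K0 V hV →ₗᵢ[ℂ] K0 V hV).toContinuousLinearMap

def B0c (hAV : A ∘L V = V ∘L A) : K0 V hV →L[ℂ] K0 V hV :=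
  (B0 V hV A hAV).mkContinuous ‖A‖ (norm_B0 V hV A hAV)

end DL14

section main

open UniformSpace DL14
open scoped NNReal

variable {H : Type u} [NormedAddCommGroup H] [InnerProductSpace ℂ H]
variable (V : H →L[ℂ] H) (hV : ∀ x : H, ‖V x‖ = ‖x‖)
variable (A : H →L[ℂ] H) (hAV : A ∘L V = V ∘L A)

local notation "Kc" => Completion (K0 V hV)

def eC : K0 V hV →L[ℂ] Completion (K0 V hV) := Completion.toComplL

lemma heC : ∀ z : K0 V hV, ‖z‖ ≤ ((1 : ℝ≥0) : ℝ) * ‖eC V hV z‖ := fun z => by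
  have : eC V hV z = (z : Completion (K0 V hV)) := rfl
  rw [this, Completion.norm_coe]; simp

lemma denseC : DenseRange (eC V hV) := by
  have : ⇑(eC V hV) = ((↑) : K0 V hV → Completion (K0 V hV)) := rfl
  rw [this]; exact Completion.denseRange_coe

def indC : IsUniformInducing (eC V hV) :=
  (ContinuousLinearMap.isUniformEmbedding_of_bound (eC V hV) (heC V hV)).isUniformInducing

def UC : Completion (K0 V hV) →L[ℂ] Completion (K0 V hV) :=
  ((eC V hV).comp (U0c V hV)).extend (eC V hV)

def WC : Completion (K0 V hV) →L[ℂ] Completion (K0 V hV) :=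
  ((eC V hV).comp (W0c V hV)).extend (eC V hV)

def BC : Completion (K0 V hV) →L[ℂ] Completion (K0 V hV) :=
  ((eC V hV).comp (B0c V hV A hAV)).extend (eC V hV)

def JC : H →L[ℂ] Completion (K0 V hV) := (eC V hV).comp (Jc V hV)

lemma UC_coe (z : K0 V hV) : UC V hV (z : Completion (K0 V hV)) = ((U0c V hV z : K0 V hV) : Completion (K0 V hV)) :=
  ContinuousLinearMap.extend_eq _ (denseC V hV) (indC V hV) z

lemma WC_coe (z : K0 V hV) : WC V hV (z : Completion (K0 V hV)) = ((W0c V hV z : K0 V hV) : Completion (K0 V hV)) :=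
  ContinuousLinearMap.extend_eq _ (denseC V hV) (indC V hV) z

lemma BC_coe (z : K0 V hV) : BC V hV A hAV (z : Completion (K0 V hV)) = ((B0c V hV A hAV z : K0 V hV) : Completion (K0 V hV)) :=
  ContinuousLinearMap.extend_eq _ (denseC V hV) (indC V hV) z

lemma JC_norm (x : H) : ‖JC V hV x‖ = ‖x‖ := by
  have : JC V hV x = ((Jc V hV x : K0 V hV) : Completion (K0 V hV)) := rfl
  rw [this, Completion.norm_coe]
  exact norm_J0 V hV x

lemma UC_norm (y : Completion (K0 V hV)) : ‖UC V hV y‖ = ‖y‖ := by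
  induction y using Completion.induction_on with
  | hp => exact isClosed_eq ((UC V hV).continuous.norm) continuous_norm
  | ih z => rw [UC_coe, Completion.norm_coe, Completion.norm_coe]; exact norm_U0 V hV z

lemma UC_WC (y : Completion (K0 V hV)) : UC V hV (WC V hV y) = y := by
  induction y using Completion.induction_on with
  | hp => exact isClosed_eq (((UC V hV).continuous.comp (WC V hV).continuous)) continuous_id
  | ih z =>
    rw [WC_coe, UC_coe]
    exact congrArg _ (U0_W0 V hV z)

lemma UC_surj : Function.Surjective (UC V hV) := fun y => ⟨WC V hV y, UC_WC V hV y⟩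

lemma UC_JC : (UC V hV) ∘L (JC V hV) = (JC V hV) ∘L V := by
  ext x
  show UC V hV ((Jc V hV x : K0 V hV) : Completion (K0 V hV)) = ((Jc V hV (V x) : K0 V hV) : Completion (K0 V hV))
  rw [UC_coe]
  rfl

lemma BC_JC : (BC V hV A hAV) ∘L (JC V hV) = (JC V hV) ∘L A := by
  ext x
  show BC V hV A hAV ((Jc V hV x : K0 V hV) : Completion (K0 V hV)) = ((Jc V hV (A x) : K0 V hV) : Completion (K0 V hV))
  rw [BC_coe]
  rfl

lemma BC_UC : (BC V hV A hAV) ∘L (UC V hV) = (UC V hV) ∘L (BC V hV A hAV) := by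
  ext y
  show BC V hV A hAV (UC V hV y) = UC V hV (BC V hV A hAV y)
  induction y using Completion.induction_on with
  | hp =>
    exact isClosed_eq ((BC V hV A hAV).continuous.comp (UC V hV).continuous)
      ((UC V hV).continuous.comp (BC V hV A hAV).continuous)
  | ih z =>
    rw [UC_coe, BC_coe, BC_coe, UC_coe]
    exact congrArg _ (B0_U0 V hV A hAV z)

lemma BC_norm : ‖BC V hV A hAV‖ = ‖A‖ := by
  refine le_antisymm ?_ ?_
  · have h1 := ContinuousLinearMap.opNorm_extend_le ((eC V hV).comp (B0c V hV A hAV))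
      (denseC V hV) (heC V hV)
    have h2 : ‖(eC V hV).comp (B0c V hV A hAV)‖ ≤ ‖A‖ := by
      refine ContinuousLinearMap.opNorm_le_bound _ (norm_nonneg A) fun z => ?_
      have : (eC V hV).comp (B0c V hV A hAV) z = ((B0c V hV A hAV z : K0 V hV) : Completion (K0 V hV)) := rfl
      rw [this, Completion.norm_coe]
      exact norm_B0 V hV A hAV z
    calc ‖BC V hV A hAV‖ ≤ ((1 : ℝ≥0) : ℝ) * ‖(eC V hV).comp (B0c V hV A hAV)‖ := h1
      _ ≤ ‖A‖ := by simpa using h2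
  · refine ContinuousLinearMap.opNorm_le_bound _ (norm_nonneg _) fun x => ?_
    have h1 : ‖A x‖ = ‖JC V hV (A x)‖ := (JC_norm V hV (A x)).symm
    have h2 : JC V hV (A x) = BC V hV A hAV (JC V hV x) := by
      have := congrArg (fun f : H →L[ℂ] Completion (K0 V hV) => f x) (BC_JC V hV A hAV)
      simpa using this.symm
    rw [h1, h2]
    calc ‖BC V hV A hAV (JC V hV x)‖ ≤ ‖BC V hV A hAV‖ * ‖JC V hV x‖ :=
        (BC V hV A hAV).le_opNorm _
      _ = ‖BC V hV A hAV‖ * ‖x‖ := by rw [JC_norm]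

end main


end DL14sec

/-- If `V` is an isometry on `H` and `A` commutes with `V`, then there exist a Hilbert space
`K`, an isometric embedding `J : H → K`, a unitary `U` on `K` extending `V` (`U J = J V`),
and a bounded operator `B` on `K` with `‖B‖ = ‖A‖`, `B J = J A`, and `B U = U B`. -/
theorem stmt_14 {H : Type u} [NormedAddCommGroup H] [InnerProductSpace ℂ H] [CompleteSpace H]
    (V : H →L[ℂ] H) (hV : ∀ x : H, ‖V x‖ = ‖x‖)
    (A : H →L[ℂ] H) (hAV : A ∘L V = V ∘L A) :
    ∃ (K : Type u) (_ : NormedAddCommGroup K) (_ : InnerProductSpace ℂ K)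
      (_ : CompleteSpace K) (J : H →L[ℂ] K) (U : K →L[ℂ] K) (B : K →L[ℂ] K),
      (∀ x : H, ‖J x‖ = ‖x‖) ∧
      (∀ y : K, ‖U y‖ = ‖y‖) ∧ Function.Surjective U ∧
      U ∘L J = J ∘L V ∧
      ‖B‖ = ‖A‖ ∧ B ∘L J = J ∘L A ∧ B ∘L U = U ∘L B := by
  exact ⟨UniformSpace.Completion (DL14.K0 V hV), inferInstance, inferInstance, inferInstance,
    JC V hV, UC V hV, BC V hV A hAV,
    JC_norm V hV, UC_norm V hV, UC_surj V hV, UC_JC V hV, BC_norm V hV A hAV,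
    BC_JC V hV A hAV, BC_UC V hV A hAV⟩
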